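/- The quantitative Krivine machine respects the algebraic equivalence: over a commutative semiring S in which every positive integer has a multiplicative inverse, if M and N are closed algebraic terms with M ≡_alg N, then K̂(M)_t = K̂(N)_t for every simple resource term t. -/
import Mathlib


set_option maxHeartbeats 1000000

noncomputable section
open scoped Classical

/-- Simple terms of the resource λ-calculus.  The argument of an application is a
finite multiset of simple terms (a simple poly-term), represented as a `List`
(read up to permutation).  The syntax is enriched with the constant `c0`. -/
inductive RTerm : Type
  | var : ℕ → RTerm
  | lam : ℕ → RTerm → RTerm
  | app : RTerm → List RTerm → RTerm
  | c0  : RTerm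

/-- `deg x s` is the number of (free) occurrences of the variable `x` in `s`. -/
def RTerm.deg (x : ℕ) : RTerm → ℕ
  | .var y => if y = x then 1 else 0
  | .lam y t => if y = x then 0 else t.deg x
  | .app t T => t.deg x + (T.attach.map (fun u => u.1.deg x)).sum
  | .c0 => 0
decreasing_by all_goals (try simp_wf) <;> first
  | (have := List.sizeOf_lt_of_mem u.2; omega)
  | omega

/-- Simultaneous substitution of (optional) terms for variables. -/
def RTerm.msubst (σ : ℕ → Option RTerm) : RTerm → RTerm
  | .var y => (σ y).getD (.var y)
  | .lam y t => .lam y (t.msubst (fun z => if z = y then none else σ z))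
  | .app t T => .app (t.msubst σ) (T.attach.map (fun u => u.1.msubst σ))
  | .c0 => .c0
decreasing_by all_goals (try simp_wf) <;> first
  | (have := List.sizeOf_lt_of_mem u.2; omega)
  | omega

/-- `subst x u t` is `t[u/x]`. -/
def RTerm.subst (x : ℕ) (u : RTerm) (t : RTerm) : RTerm :=
  t.msubst (fun y => if y = x then some u else none)

/-- Size of a simple term. -/
def RTerm.size : RTerm → ℕ
  | .var _ => 1
  | .lam _ t => t.size + 1
  | .app t T => t.size + (T.attach.map (fun u => u.1.size)).sum + 1
  | .c0 => 1
decreasing_by all_goals (try simp_wf) <;> first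
  | (have := List.sizeOf_lt_of_mem u.2; omega)
  | omega

end
noncomputable section
open scoped Classical

-- One-step linear derivative: `rderiv x u s` is the formal sum (with
-- ℕ-coefficients) of all the ways of replacing exactly one occurrence of `x`
-- in `s` by `u`.
mutual
def rderiv (x : ℕ) (u : RTerm) : RTerm → (RTerm →₀ ℕ)
  | .var y => if y = x then Finsupp.single u 1 else 0
  | .lam y t => if y = x then 0 else (rderiv x u t).mapDomain (RTerm.lam y)
  | .app t T => (rderiv x u t).mapDomain (fun s => RTerm.app s T)
      + (rderivList x u T).mapDomain (RTerm.app t)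
  | .c0 => 0

def rderivList (x : ℕ) (u : RTerm) : List RTerm → (List RTerm →₀ ℕ)
  | [] => 0
  | t :: T => (rderiv x u t).mapDomain (· :: T) + (rderivList x u T).mapDomain (t :: ·)
end

/-- Linear extension of `rderiv` to formal sums. -/
def rderivC (x : ℕ) (u : RTerm) (𝒮 : RTerm →₀ ℕ) : RTerm →₀ ℕ :=
  𝒮.sum (fun t n => n • rderiv x u t)

/-- The linear substitution `∂_x(s, t₁⋯tₙ)`: iterated linear derivative of `s`
at `x` along the elements of `T`, keeping only the terms in which all
occurrences of `x` have been consumed (it is `0` unless `deg x s = T.length`,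
assuming the usual convention that `x` is not free in the elements of `T`). -/
def rsub (x : ℕ) (T : List RTerm) (s : RTerm) : RTerm →₀ ℕ :=
  (T.foldl (fun 𝒮 u => rderivC x u 𝒮) (Finsupp.single s 1)).filter
    (fun t => t.deg x = 0)

/-- Linear extension of `∂_x` to formal sums in the first argument. -/
def rsubC (x : ℕ) (𝒮 : RTerm →₀ ℕ) (T : List RTerm) : RTerm →₀ ℕ :=
  𝒮.sum fun s n => n • rsub x T s

end
noncomputable section
open scoped Classical

/-- One-step β-reduction from a simple term to a formal sum:
the redex rule `⟨λx.s⟩T →β ∂_x(s,T)` closed under the contextual rules. -/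
inductive Step : RTerm → (RTerm →₀ ℕ) → Prop
  | redex (x : ℕ) (s : RTerm) (T : List RTerm) :
      Step (.app (.lam x s) T) (rsub x T s)
  | appL {s : RTerm} {𝒮 : RTerm →₀ ℕ} (T : List RTerm) :
      Step s 𝒮 → Step (.app s T) (𝒮.mapDomain (fun v => .app v T))
  | appR {s : RTerm} {𝒮 : RTerm →₀ ℕ} (u : RTerm) (T₁ T₂ : List RTerm) :
      Step s 𝒮 →
        Step (.app u (T₁ ++ s :: T₂)) (𝒮.mapDomain (fun v => .app u (T₁ ++ v :: T₂)))
  | lam {s : RTerm} {𝒮 : RTerm →₀ ℕ} (x : ℕ) :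
      Step s 𝒮 → Step (.lam x s) (𝒮.mapDomain (.lam x))

/-- β-reduction on formal ℕ-linear combinations of simple terms:
`s + u →β 𝒮 + u` whenever `s →β 𝒮`. -/
inductive RStep : (RTerm →₀ ℕ) → (RTerm →₀ ℕ) → Prop
  | mk {s : RTerm} {𝒮 U : RTerm →₀ ℕ} :
      Step s 𝒮 → RStep (Finsupp.single s 1 + U) (𝒮 + U)

/-- An element of `ℕ⟨Δ⟩` is β-normal when no `→β` step applies to it. -/
def RNormal (a : RTerm →₀ ℕ) : Prop := ∀ b, ¬ RStep a b

end
noncomputable section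
open scoped Classical

/-- The normalization map `NF : ℕ⟨Δ⟩ → ℕ⟨Δ₀⟩`, well defined thanks to
confluence and strong normalization of `→β` over `ℕ`: `NF a` is the unique
β-normal reduct of `a`. -/
def NF (a : RTerm →₀ ℕ) : RTerm →₀ ℕ :=
  if h : ∃ b, Relation.ReflTransGen RStep a b ∧ RNormal b then h.choose else 0

/-- `NF(t)_{c₀}`: the coefficient of the constant `c₀` in the normal form of
the simple term `t`. -/
def NFc0 (t : RTerm) : ℕ := NF (Finsupp.single t 1) RTerm.c0

end
noncomputable section
open scoped Classical

/-- The multiplicity `m(t)` of a simple resource term: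
`m(x) = 1`, `m(λx.t) = m(t)`,
`m(⟨t⟩T) = m(t) · ∏_{u ∈ supp T} T(u)! · m(u)^{T(u)}`. -/
def mult : RTerm → ℕ
  | .var _ => 1
  | .lam _ t => mult t
  | .app t T =>
      mult t * (T.attach.map fun u => mult u.1).prod *
        ∏ u ∈ (↑T : Multiset RTerm).toFinset, ((↑T : Multiset RTerm).count u).factorial
  | .c0 => 1
decreasing_by all_goals (try simp_wf) <;> first
  | (have := List.sizeOf_lt_of_mem u.2; omega)
  | omega

/-- The multiplicity `m(T) = ∏_{u ∈ supp T} T(u)! · m(u)^{T(u)}`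
of a simple poly-term `T`. -/
def multPoly (T : List RTerm) : ℕ :=
  (T.map mult).prod *
    ∏ u ∈ (↑T : Multiset RTerm).toFinset, ((↑T : Multiset RTerm).count u).factorial

end
noncomputable section
open scoped Classical

/-- Terms of the algebraic λ-calculus over a semiring `S`
(`M ::= x | λx.M | (M)N | αM | M+N | 0`), enriched with the constant `c₀`. -/
inductive ATerm (S : Type*) : Type _
  | var  : ℕ → ATerm S
  | lam  : ℕ → ATerm S → ATerm S
  | app  : ATerm S → ATerm S → ATerm S
  | smul : S → ATerm S → ATerm S
  | add  : ATerm S → ATerm S → ATerm S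
  | zero : ATerm S
  | c0   : ATerm S

variable {S : Type*}

/-- Free variables of an algebraic term. -/
def ATerm.fv : ATerm S → Set ℕ
  | .var x => {x}
  | .lam x M => M.fv \ {x}
  | .app M N => M.fv ∪ N.fv
  | .smul _ M => M.fv
  | .add M N => M.fv ∪ N.fv
  | .zero => ∅
  | .c0 => ∅

/-- The weight `w(t,M)` of a simple resource term `t` in an algebraic term `M`:
`w(x,x) = 1`, `w(λx.t, λx.M) = w(t,M)`,
`w(⟨t⟩T, (M)N) = w(t,M) · ∏_{u ∈ supp T} w(u,N)^{T(u)}`,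
`w(t, αM) = α·w(t,M)`, `w(t, M+N) = w(t,M) + w(t,N)`, `w(c₀,c₀) = 1`,
and `w(t,M) = 0` in all other cases. -/
def weight [Semiring S] : RTerm → ATerm S → S
  | t, .smul α M => α * weight t M
  | t, .add M N => weight t M + weight t N
  | .var x, .var y => if x = y then 1 else 0
  | .lam x t, .lam y M => if x = y then weight t M else 0
  | .app t T, .app M N => weight t M * (T.attach.map fun u => weight u.1 N).prod
  | .c0, .c0 => 1
  | _, _ => 0
termination_by t M => sizeOf M
decreasing_by all_goals (try simp_wf) <;> omega

/-- The coefficient `M*_t = w(t,M) / m(t)` of the simple term `t` in the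
Taylor expansion `M* = Σ_t (w(t,M)/m(t))·t` of the algebraic term `M`
(meaningful when the positive integers are invertible in `S`). -/
def taylorCoeff [Semiring S] (t : RTerm) (M : ATerm S) : S :=
  Ring.inverse ((mult t : S)) * weight t M

/-- The equivalence `≡_alg` of the algebraic λ-calculus: the congruence
generated by the left `S`-module axioms and the linearity axioms. -/
inductive AlgEq [Semiring S] : ATerm S → ATerm S → Prop
  | refl (M) : AlgEq M M
  | symm {M N} : AlgEq M N → AlgEq N M
  | trans {M N P} : AlgEq M N → AlgEq N P → AlgEq M P
  -- congruence rules
  | lamCong (x) {M N} : AlgEq M N → AlgEq (.lam x M) (.lam x N)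
  | appCong {M M' N N'} : AlgEq M M' → AlgEq N N' → AlgEq (.app M N) (.app M' N')
  | smulCong (α) {M N} : AlgEq M N → AlgEq (.smul α M) (.smul α N)
  | addCong {M M' N N'} : AlgEq M M' → AlgEq N N' → AlgEq (.add M N) (.add M' N')
  -- left S-module axioms
  | addZero (M) : AlgEq (.add M .zero) M
  | addAssoc (M N P) : AlgEq (.add (.add M N) P) (.add M (.add N P))
  | addComm (M N) : AlgEq (.add M N) (.add N M)
  | smulAdd (α M N) : AlgEq (.smul α (.add M N)) (.add (.smul α M) (.smul α N))
  | addSmul (α β M) : AlgEq (.add (.smul α M) (.smul β M)) (.smul (α + β) M)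
  | smulSmul (α β M) : AlgEq (.smul α (.smul β M)) (.smul (α * β) M)
  | oneSmul (M) : AlgEq (.smul 1 M) M
  | zeroSmul (M) : AlgEq (.smul (0 : S) M) .zero
  | smulZero (α) : AlgEq (.smul α .zero) .zero
  -- linearity axioms
  | lamAdd (x M N) : AlgEq (.lam x (.add M N)) (.add (.lam x M) (.lam x N))
  | lamSmul (x α M) : AlgEq (.lam x (.smul α M)) (.smul α (.lam x M))
  | lamZero (x) : AlgEq (.lam x (.zero : ATerm S)) .zero
  | zeroApp (M) : AlgEq (.app .zero M) .zero
  | smulApp (α M N) : AlgEq (.app (.smul α M) N) (.smul α (.app M N))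
  | addApp (M N P) : AlgEq (.app (.add M N) P) (.add (.app M P) (.app N P))

/-- Pure λ-terms: algebraic terms built only from variables, abstraction and
application. -/
inductive ATerm.Pure : ATerm S → Prop
  | var (x) : Pure (.var x)
  | lam (x) {M} : Pure M → Pure (.lam x M)
  | app {M N} : Pure M → Pure N → Pure (.app M N)

end
noncomputable section
open scoped Classical

/-- Resource closures: a closure is a pair of a simple poly-term and a
resource environment; a resource environment is (the graph of) a finite map
from variables to resource closures, represented as an association list whose
entries for a common variable are read as concatenated. -/
inductive RClo : Type
  | mk : List RTerm → List (ℕ × RClo) → RClo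

/-- Resource environments. -/
abbrev REnv : Type := List (ℕ × RClo)

/-- The empty resource closure `1 = (1, e₀)`. -/
def RClo.empty : RClo := .mk [] []

/-- Concatenation of resource closures. -/
def RClo.concat : RClo → RClo → RClo
  | .mk T e, .mk T' e' => .mk (T ++ T') (e ++ e')

mutual
/-- Size of a resource closure. -/
def RClo.csize : RClo → ℕ
  | .mk T e => (T.map RTerm.size).sum + REnv.esize e
/-- Size of a resource environment. -/
def REnv.esize : List (ℕ × RClo) → ℕ
  | [] => 0
  | p :: e => RClo.csize p.2 + REnv.esize e
end

/-- `e(x)`: the closure associated with `x` by the environment `e`. -/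
def REnv.lookup (x : ℕ) (e : REnv) : RClo :=
  ((e.filter fun p => p.1 == x).map Prod.snd).foldr RClo.concat RClo.empty

mutual
/-- A resource closure is (hereditarily) the empty closure `1`. -/
def RClo.IsOne : RClo → Prop
  | .mk T e => T = [] ∧ REnv.Triv e
/-- A resource environment is trivial (it maps every variable to `1`). -/
def REnv.Triv : List (ℕ × RClo) → Prop
  | [] => True
  | p :: e => RClo.IsOne p.2 ∧ REnv.Triv e
end

/-- `e(y) = 1` for every `y ≠ x`. -/
def REnv.TrivExcept (x : ℕ) (e : REnv) : Prop :=
  ∀ p ∈ e, p.1 ≠ x → RClo.IsOne p.2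

/-- All order-preserving splittings of a list into two sublists. -/
def splits {α : Type*} : List α → List (List α × List α)
  | [] => [([], [])]
  | a :: l =>
      ((splits l).map fun p => (a :: p.1, p.2)) ++ ((splits l).map fun p => (p.1, a :: p.2))

/-- The decompositions `e = e'e''` of a resource environment: one
representative of each splitting of `e`, up to permutation. -/
def decomps (e : REnv) : List (REnv × REnv) :=
  (splits e).pwFilter fun p q => ¬ (p.1.Perm q.1 ∧ p.2.Perm q.2)

lemma REnv.esize_append (e e' : REnv) :
    REnv.esize (e ++ e') = REnv.esize e + REnv.esize e' := by
  induction e with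
  | nil => simp [REnv.esize]
  | cons p e ih => simp [REnv.esize, ih]; omega

lemma RClo.csize_concat (c d : RClo) :
    (c.concat d).csize = c.csize + d.csize := by
  cases c; cases d
  simp [RClo.concat, RClo.csize, REnv.esize_append]
  omega

lemma REnv.csize_lookup_le (x : ℕ) (e : REnv) :
    (REnv.lookup x e).csize ≤ REnv.esize e := by
  induction e with
  | nil => simp [REnv.lookup, RClo.empty, RClo.csize, REnv.esize]
  | cons p e ih =>
      rcases p with ⟨y, c⟩
      by_cases h : y = x
      · have hl : REnv.lookup x ((y, c) :: e) = c.concat (REnv.lookup x e) := by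
          simp [REnv.lookup, List.filter_cons, h]
        rw [hl, RClo.csize_concat]
        simp only [REnv.esize]
        exact Nat.add_le_add_left ih _
      · have hl : REnv.lookup x ((y, c) :: e) = REnv.lookup x e := by
          simp [REnv.lookup, List.filter_cons, h]
        rw [hl]
        simp only [REnv.esize]
        exact le_trans ih (Nat.le_add_left _ _)

lemma esize_of_mem_splits {e : REnv} {p : REnv × REnv} (h : p ∈ splits e) :
    REnv.esize p.1 + REnv.esize p.2 = REnv.esize e := by
  induction e generalizing p with
  | nil =>
      simp [splits] at h
      simp [h, REnv.esize]
  | cons a l ih =>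
      simp only [splits, List.mem_append, List.mem_map] at h
      rcases h with ⟨q, hq, rfl⟩ | ⟨q, hq, rfl⟩ <;>
        simp [REnv.esize, ← ih hq] <;> omega

lemma esize_of_mem_decomps {e : REnv} {p : REnv × REnv} (h : p ∈ decomps e) :
    REnv.esize p.1 + REnv.esize p.2 = REnv.esize e :=
  esize_of_mem_splits ((List.pwFilter_sublist _).subset h)

lemma attach_map_size_sum (T : List RTerm) :
    (T.attach.map fun u => u.1.size).sum = (T.map RTerm.size).sum := by
  simp [List.attach_map_val]

/-- Algebraic closures and environments: an algebraic closure is a pair of an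
algebraic term and an algebraic environment; an algebraic environment is a
finite partial map from variables to algebraic closures, represented as an
association list (the first entry for a variable is its binding). -/
inductive AClo (S : Type*) : Type _
  | mk : ATerm S → List (ℕ × AClo S) → AClo S

/-- Algebraic environments. -/
abbrev AEnv (S : Type*) : Type _ := List (ℕ × AClo S)

/-- `E(x)`: the closure associated with `x` by the environment `E`, if any. -/
def AEnv.lookup {S : Type*} (x : ℕ) (E : AEnv S) : Option (AClo S) :=
  (E.find? fun p => p.1 == x).map Prod.snd

variable {S : Type*} [CommSemiring S]

/-- The quantitative Krivine machine `K`: a matrix associating a scalar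
`K(M,E,Π)_{(t,e,π)} ∈ S` with an algebraic state `(M,E,Π)` and a resource
state `(t,e,π)`, defined by lexicographic induction on
(size of the resource state, size of the algebraic term). -/
def KM : ATerm S → AEnv S → List (AClo S) → RTerm → REnv → List RClo → S
  | .smul α M, E, Pi, t, e, π => α * KM M E Pi t e π
  | .add M N, E, Pi, t, e, π => KM M E Pi t e π + KM N E Pi t e π
  | .c0, _, [], .c0, e, [] => if REnv.Triv e then 1 else 0
  | .var x, E, Pi, .var y, e, π =>
      if x = y ∧ REnv.TrivExcept x e then
        match AEnv.lookup x E, hr : REnv.lookup x e with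
        | some (.mk M' E'), .mk [u] e' =>
            have hsz : u.size + REnv.esize e' ≤ REnv.esize e := by
              have h := REnv.csize_lookup_le x e
              rw [hr] at h
              simpa [RClo.csize] using h
            KM M' E' Pi u e' π
        | _, _ => 0
      else 0
  | .lam x M, E, Γ :: Pi, .lam y u, e, c :: π =>
      if x = y ∧ RClo.IsOne (REnv.lookup x e) ∧ x ∉ E.map Prod.fst then
        KM M ((x, Γ) :: E) Pi u ((x, c) :: e) π
      else 0
  | .app M N, E, Pi, .app t T, e, π =>
      ((decomps e).attach.map fun (p : {q // q ∈ decomps e}) =>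
          have hsz : REnv.esize p.1.1 + REnv.esize p.1.2 = REnv.esize e :=
            esize_of_mem_decomps p.2
          KM M E (.mk N E :: Pi) t p.1.1 (.mk T p.1.2 :: π)).sum
  | _, _, _, _, _, _ => 0
termination_by M _ _ t e π =>
  (t.size + REnv.esize e + (π.map RClo.csize).sum, sizeOf M)
decreasing_by
  all_goals simp_wf
  all_goals
    first
    | (apply Prod.Lex.right; omega)
    | (apply Prod.Lex.left
       simp [RTerm.size, REnv.esize, RClo.csize, attach_map_size_sum]
       omega)

/-- `K̂(M)_t = K(M,∅,∅)_{(t,e₀,∅)}`, for a closed algebraic term `M` and a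
simple resource term `t`. -/
def Khat (M : ATerm S) (t : RTerm) : S := KM M [] [] t [] []

end
noncomputable section KMresp
open scoped Classical
variable {S : Type*} [CommSemiring S]

lemma KM_smul (α : S) (M : ATerm S) (E : AEnv S) (Pi : List (AClo S)) (t : RTerm)
    (e : REnv) (π : List RClo) : KM (.smul α M) E Pi t e π = α * KM M E Pi t e π := by
  rw [KM]

lemma KM_add (M N : ATerm S) (E : AEnv S) (Pi : List (AClo S)) (t : RTerm)
    (e : REnv) (π : List RClo) :
    KM (.add M N) E Pi t e π = KM M E Pi t e π + KM N E Pi t e π := by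
  rw [KM]

lemma KM_zero (E : AEnv S) (Pi : List (AClo S)) (t : RTerm) (e : REnv) (π : List RClo) :
    KM (.zero : ATerm S) E Pi t e π = 0 := by
  rw [KM] <;> simp

lemma KM_app (M N : ATerm S) (E : AEnv S) (Pi : List (AClo S)) (t : RTerm)
    (T : List RTerm) (e : REnv) (π : List RClo) :
    KM (.app M N) E Pi (.app t T) e π =
      ((decomps e).attach.map fun p => KM M E (.mk N E :: Pi) t p.1.1 (.mk T p.1.2 :: π)).sum := by
  rw [KM]

lemma KM_lam (x : ℕ) (M : ATerm S) (E : AEnv S) (Γ : AClo S) (Pi : List (AClo S))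
    (y : ℕ) (u : RTerm) (e : REnv) (c : RClo) (π : List RClo) :
    KM (.lam x M) E (Γ :: Pi) (.lam y u) e (c :: π) =
      if x = y ∧ RClo.IsOne (REnv.lookup x e) ∧ x ∉ E.map Prod.fst then
        KM M ((x, Γ) :: E) Pi u ((x, c) :: e) π
      else 0 := by
  rw [KM]

lemma KM_var (x y : ℕ) (E : AEnv S) (Pi : List (AClo S)) (e : REnv) (π : List RClo) :
    KM (.var x) E Pi (.var y) e π =
      if x = y ∧ REnv.TrivExcept x e then
        match AEnv.lookup x E, REnv.lookup x e with
        | some (.mk M' E'), .mk [u] e' => KM M' E' Pi u e' π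
        | _, _ => 0
      else 0 := by
  rw [KM]
  split
  · split
    · rename_i M' E' u e' hE he
      show KM M' E' Pi u e' π = _
      rw [hE, he]
    · rename_i hne
      rcases hA : AEnv.lookup x E with _ | ⟨M',E'⟩ <;>
        rcases hr : REnv.lookup x e with ⟨T,e'⟩
      all_goals rcases T with _|⟨u,_|⟨v,T⟩⟩
      all_goals first | rfl | exact (hne _ _ _ _ hA hr).elim
  · rfl

-- mismatch lemmas
lemma KM_var_lam (x : ℕ) (E : AEnv S) Pi y u e π :
    KM (.var x) E Pi (.lam y u) e π = 0 := by rw [KM] <;> simp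
lemma KM_var_app (x : ℕ) (E : AEnv S) Pi t T e π :
    KM (.var x) E Pi (.app t T) e π = 0 := by rw [KM] <;> simp
lemma KM_var_c0 (x : ℕ) (E : AEnv S) Pi e π :
    KM (.var x) E Pi .c0 e π = 0 := by rw [KM] <;> simp
lemma KM_lam_var (x : ℕ) (M : ATerm S) E Pi y e π :
    KM (.lam x M) E Pi (.var y) e π = 0 := by rw [KM] <;> simp
lemma KM_lam_app (x : ℕ) (M : ATerm S) E Pi t T e π :
    KM (.lam x M) E Pi (.app t T) e π = 0 := by rw [KM] <;> simp
lemma KM_lam_c0 (x : ℕ) (M : ATerm S) E Pi e π :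
    KM (.lam x M) E Pi .c0 e π = 0 := by rw [KM] <;> simp
lemma KM_lam_nilPi (x : ℕ) (M : ATerm S) E t e π :
    KM (.lam x M) E [] t e π = 0 := by rw [KM] <;> simp
lemma KM_lam_nilpi (x : ℕ) (M : ATerm S) E Pi t e :
    KM (.lam x M) E Pi t e [] = 0 := by rw [KM] <;> simp
lemma KM_app_var (M N : ATerm S) E Pi y e π :
    KM (.app M N) E Pi (.var y) e π = 0 := by rw [KM] <;> simp
lemma KM_app_lam (M N : ATerm S) E Pi y u e π :
    KM (.app M N) E Pi (.lam y u) e π = 0 := by rw [KM] <;> simp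
lemma KM_app_c0 (M N : ATerm S) E Pi e π :
    KM (.app M N) E Pi .c0 e π = 0 := by rw [KM] <;> simp

lemma KM_c0_eq (E : AEnv S) (Pi : List (AClo S)) (t : RTerm) (e : REnv) (π : List RClo) :
    KM (.c0 : ATerm S) E Pi t e π =
      if Pi = [] ∧ t = RTerm.c0 ∧ π = [] ∧ REnv.Triv e then 1 else 0 := by
  rcases Pi with _|⟨Γ,Pi⟩ <;> rcases t <;> rcases π with _|⟨c,π⟩ <;> rw [KM] <;>
    simp <;> try (split <;> simp_all)

end KMresp
noncomputable section KMresp2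
open scoped Classical
variable {S : Type*} [CommSemiring S]

/-- Equivalence of algebraic closures: terms are `≡_alg` and environments have
the same keys with pointwise equivalent bindings. -/
inductive CloEq : AClo S → AClo S → Prop
  | mk {M M' : ATerm S} {E E' : AEnv S} :
      AlgEq M M' → E.map Prod.fst = E'.map Prod.fst →
      (∀ x c c', AEnv.lookup x E = some c → AEnv.lookup x E' = some c' → CloEq c c') →
      CloEq (.mk M E) (.mk M' E')

/-- Equivalence of algebraic environments. -/
def AEnvEq (E E' : AEnv S) : Prop :=
  E.map Prod.fst = E'.map Prod.fst ∧
  ∀ x c c', AEnv.lookup x E = some c → AEnv.lookup x E' = some c' → CloEq c c'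

lemma AEnv.lookup_cons (y x : ℕ) (c : AClo S) (E : AEnv S) :
    AEnv.lookup y ((x, c) :: E) = if x = y then some c else AEnv.lookup y E := by
  by_cases h : x = y <;> simp [AEnv.lookup, List.find?_cons, h]

lemma AEnv.lookup_eq_none_iff (x : ℕ) (E : AEnv S) :
    AEnv.lookup x E = none ↔ x ∉ E.map Prod.fst := by
  simp [AEnv.lookup, List.find?_eq_none, List.mem_map]
  aesop

lemma AEnv.mem_of_lookup {x : ℕ} {E : AEnv S} {c : AClo S}
    (h : AEnv.lookup x E = some c) : ∃ p ∈ E, p.2 = c := by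
  rw [AEnv.lookup, Option.map_eq_some_iff] at h
  obtain ⟨p, hp, rfl⟩ := h
  exact ⟨p, List.mem_of_find?_eq_some hp, rfl⟩

lemma CloEq_refl_aux : ∀ n (c : AClo S), sizeOf c ≤ n → CloEq c c := by
  intro n
  induction n with
  | zero => intro c h; cases c with | mk M E => simp at h
  | succ n ih =>
      intro c h
      cases c with
      | mk M E =>
        refine CloEq.mk (AlgEq.refl M) rfl ?_
        intro x c c' h1 h2
        rw [h1] at h2
        obtain rfl : c = c' := Option.some.inj h2
        obtain ⟨p, hp, rfl⟩ := AEnv.mem_of_lookup h1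
        have h3 := List.sizeOf_lt_of_mem hp
        apply ih
        cases p with
        | mk a b => simp at h h3 ⊢; omega

lemma CloEq.refl (c : AClo S) : CloEq c c := CloEq_refl_aux (sizeOf c) c le_rfl

lemma AEnvEq.refl (E : AEnv S) : AEnvEq E E :=
  ⟨rfl, fun x c c' h1 h2 => by
    rw [h1] at h2; obtain rfl : c = c' := Option.some.inj h2; exact CloEq.refl c⟩

lemma CloEq.symm {c d : AClo S} (h : CloEq c d) : CloEq d c := by
  induction h with
  | mk hMN hkeys _ ih =>
      exact CloEq.mk hMN.symm hkeys.symm fun x c c' h1 h2 => ih x c' c h2 h1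

lemma AEnvEq.symm {E E' : AEnv S} (h : AEnvEq E E') : AEnvEq E' E :=
  ⟨h.1.symm, fun x c c' h1 h2 => (h.2 x c' c h2 h1).symm⟩

lemma CloEq.dest {M M' : ATerm S} {E E' : AEnv S}
    (h : CloEq (AClo.mk M E) (AClo.mk M' E')) : AlgEq M M' ∧ AEnvEq E E' := by
  cases h with
  | mk h1 h2 h3 => exact ⟨h1, h2, h3⟩

lemma AEnvEq.cons {E E' : AEnv S} (x : ℕ) {Γ Γ' : AClo S}
    (hc : CloEq Γ Γ') (h : AEnvEq E E') : AEnvEq ((x, Γ) :: E) ((x, Γ') :: E') := by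
  refine ⟨by simp [h.1], fun y c c' h1 h2 => ?_⟩
  rw [AEnv.lookup_cons] at h1 h2
  by_cases hxy : x = y
  · simp only [hxy, if_pos rfl] at h1 h2
    obtain rfl : Γ = c := Option.some.inj h1
    obtain rfl : Γ' = c' := Option.some.inj h2
    exact hc
  · simp only [if_neg hxy] at h1 h2
    exact h.2 y c c' h1 h2

lemma AEnvEq.lookup_some {E E' : AEnv S} (h : AEnvEq E E') {x : ℕ} {c : AClo S}
    (hc : AEnv.lookup x E = some c) :
    ∃ c', AEnv.lookup x E' = some c' ∧ CloEq c c' := by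
  rcases h' : AEnv.lookup x E' with _ | c'
  · rw [AEnv.lookup_eq_none_iff, ← h.1, ← AEnv.lookup_eq_none_iff] at h'
    rw [h'] at hc; cases hc
  · exact ⟨c', rfl, h.2 x c c' hc h'⟩

lemma AEnvEq.lookup_none {E E' : AEnv S} (h : AEnvEq E E') {x : ℕ}
    (hc : AEnv.lookup x E = none) : AEnv.lookup x E' = none := by
  rw [AEnv.lookup_eq_none_iff, ← h.1, ← AEnv.lookup_eq_none_iff]; exact hc

lemma RTerm.size_pos (t : RTerm) : 0 < t.size := by
  cases t <;> rw [RTerm.size] <;> omega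

end KMresp2
noncomputable section KMresp3
open scoped Classical
variable {S : Type*} [CommSemiring S]

lemma size_var' (y : ℕ) : (RTerm.var y).size = 1 := by rw [RTerm.size]
lemma size_lam' (y : ℕ) (u : RTerm) : (RTerm.lam y u).size = u.size + 1 := by rw [RTerm.size]
lemma size_app' (t : RTerm) (T : List RTerm) :
    (RTerm.app t T).size = t.size + (T.map RTerm.size).sum + 1 := by
  rw [RTerm.size, attach_map_size_sum]
lemma csize_mk (T : List RTerm) (e : REnv) :
    (RClo.mk T e).csize = (T.map RTerm.size).sum + REnv.esize e := by rw [RClo.csize]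
lemma esize_cons (x : ℕ) (c : RClo) (e : REnv) :
    REnv.esize ((x, c) :: e) = c.csize + REnv.esize e := by rw [REnv.esize]

lemma forall₂_cloEq_symm {Pi Pi' : List (AClo S)} (h : List.Forall₂ CloEq Pi Pi') :
    List.Forall₂ CloEq Pi' Pi := by
  induction h with
  | nil => exact .nil
  | cons h _ ih => exact .cons h.symm ih

lemma forall₂_cloEq_refl (Pi : List (AClo S)) : List.Forall₂ CloEq Pi Pi :=
  List.forall₂_same.2 fun c _ => CloEq.refl c

theorem KM_congr (n : ℕ) : ∀ (t : RTerm) (e : REnv) (π : List RClo),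
    t.size + REnv.esize e + (π.map RClo.csize).sum ≤ n →
    ∀ (M N : ATerm S), AlgEq M N →
    ∀ (E E' : AEnv S), AEnvEq E E' → ∀ (Pi Pi' : List (AClo S)), List.Forall₂ CloEq Pi Pi' →
    KM M E Pi t e π = KM N E' Pi' t e π := by
  induction n with
  | zero => intro t e π hμ; have := RTerm.size_pos t; omega
  | succ n ihn =>
    intro t e π hμ
    -- Part A: congruence of the machine in the environments/stacks, for a fixed term.
    have A : ∀ (P : ATerm S), ∀ (E E' : AEnv S), AEnvEq E E' →
        ∀ (Pi Pi' : List (AClo S)), List.Forall₂ CloEq Pi Pi' →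
        KM P E Pi t e π = KM P E' Pi' t e π := by
      intro P
      induction P with
      | var x =>
        intro E E' hEE Pi Pi' hPi
        cases t with
        | var y =>
          rw [KM_var, KM_var]
          by_cases hcond : x = y ∧ REnv.TrivExcept x e
          · rw [if_pos hcond, if_pos hcond]
            rcases hA : AEnv.lookup x E with _ | ⟨M₁, E₁⟩
            · rw [hEE.lookup_none hA]
            · obtain ⟨c', hA', hce⟩ := hEE.lookup_some hA
              rcases c' with ⟨M₂, E₂⟩
              rw [hA']
              rcases he : REnv.lookup x e with ⟨T, e'⟩
              rcases T with _ | ⟨u, _ | ⟨v, T⟩⟩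
              · rfl
              · obtain ⟨h1, h2⟩ := hce.dest
                refine ihn u e' π ?_ M₁ M₂ h1 E₁ E₂ h2 Pi Pi' hPi
                have hc := REnv.csize_lookup_le x e
                rw [he, csize_mk] at hc
                rw [size_var'] at hμ
                simp at hc
                omega
              · rfl
          · rw [if_neg hcond, if_neg hcond]
        | lam y u => rw [KM_var_lam, KM_var_lam]
        | app t T => rw [KM_var_app, KM_var_app]
        | c0 => rw [KM_var_c0, KM_var_c0]
      | lam x P ihP =>
        intro E E' hEE Pi Pi' hPi
        cases t with
        | lam y u =>
          cases hPi with
          | nil => rw [KM_lam_nilPi, KM_lam_nilPi]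
          | cons hΓ hs =>
            cases π with
            | nil => rw [KM_lam_nilpi, KM_lam_nilpi]
            | cons c πs =>
              rw [KM_lam, KM_lam, hEE.1]
              by_cases hcond : x = y ∧ RClo.IsOne (REnv.lookup x e) ∧
                  x ∉ List.map Prod.fst E'
              · rw [if_pos hcond, if_pos hcond]
                refine ihn u ((x, c) :: e) πs ?_ P P (AlgEq.refl P) _ _
                  (hEE.cons x hΓ) _ _ hs
                rw [size_lam'] at hμ
                rw [esize_cons]
                simp at hμ ⊢
                omega
              · rw [if_neg hcond, if_neg hcond]
        | var y => rw [KM_lam_var, KM_lam_var]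
        | app t T => rw [KM_lam_app, KM_lam_app]
        | c0 => rw [KM_lam_c0, KM_lam_c0]
      | app P Q ihP ihQ =>
        intro E E' hEE Pi Pi' hPi
        cases t with
        | app t T =>
          rw [KM_app, KM_app]
          refine congrArg List.sum (List.map_congr_left ?_)
          rintro ⟨p, hp⟩ -
          refine ihn t p.1 (RClo.mk T p.2 :: π) ?_ P P (AlgEq.refl P) E E' hEE _ _
            (List.Forall₂.cons (CloEq.mk (AlgEq.refl Q) hEE.1 hEE.2) hPi)
          have hd := esize_of_mem_decomps hp
          rw [size_app'] at hμ
          simp [csize_mk] at hμ ⊢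
          omega
        | var y => rw [KM_app_var, KM_app_var]
        | lam y u => rw [KM_app_lam, KM_app_lam]
        | c0 => rw [KM_app_c0, KM_app_c0]
      | smul α P ihP =>
        intro E E' hEE Pi Pi' hPi
        rw [KM_smul, KM_smul, ihP E E' hEE Pi Pi' hPi]
      | add P Q ihP ihQ =>
        intro E E' hEE Pi Pi' hPi
        rw [KM_add, KM_add, ihP E E' hEE Pi Pi' hPi, ihQ E E' hEE Pi Pi' hPi]
      | zero => intro E E' _ Pi Pi' _; rw [KM_zero, KM_zero]
      | c0 =>
        intro E E' hEE Pi Pi' hPi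
        rw [KM_c0_eq, KM_c0_eq]
        cases hPi with
        | nil => rfl
        | cons _ _ => simp
    -- Part B: induction on the derivation of `≡_alg`.
    intro M N h
    induction h with
    | refl M => exact A M
    | symm h ih =>
      intro E E' hEE Pi Pi' hPi
      exact (ih E' E hEE.symm Pi' Pi (forall₂_cloEq_symm hPi)).symm
    | trans h1 h2 ih1 ih2 =>
      intro E E' hEE Pi Pi' hPi
      exact (ih1 E E (AEnvEq.refl E) Pi Pi (forall₂_cloEq_refl Pi)).trans
        (ih2 E E' hEE Pi Pi' hPi)
    | lamCong x h ih =>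
      rename_i M N
      intro E E' hEE Pi Pi' hPi
      cases t with
      | lam y u =>
        cases hPi with
        | nil => rw [KM_lam_nilPi, KM_lam_nilPi]
        | cons hΓ hs =>
          cases π with
          | nil => rw [KM_lam_nilpi, KM_lam_nilpi]
          | cons c πs =>
            rw [KM_lam, KM_lam, hEE.1]
            by_cases hcond : x = y ∧ RClo.IsOne (REnv.lookup x e) ∧
                x ∉ List.map Prod.fst E'
            · rw [if_pos hcond, if_pos hcond]
              refine ihn u ((x, c) :: e) πs ?_ M N h _ _ (hEE.cons x hΓ) _ _ hs
              rw [size_lam'] at hμ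
              rw [esize_cons]
              simp at hμ ⊢
              omega
            · rw [if_neg hcond, if_neg hcond]
      | var y => rw [KM_lam_var, KM_lam_var]
      | app t T => rw [KM_lam_app, KM_lam_app]
      | c0 => rw [KM_lam_c0, KM_lam_c0]
    | appCong h1 h2 ih1 ih2 =>
      rename_i M M' N N'
      intro E E' hEE Pi Pi' hPi
      cases t with
      | app t T =>
        rw [KM_app, KM_app]
        refine congrArg List.sum (List.map_congr_left ?_)
        rintro ⟨p, hp⟩ -
        refine ihn t p.1 (RClo.mk T p.2 :: π) ?_ M M' h1 E E' hEE _ _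
          (List.Forall₂.cons (CloEq.mk h2 hEE.1 hEE.2) hPi)
        have hd := esize_of_mem_decomps hp
        rw [size_app'] at hμ
        simp [csize_mk] at hμ ⊢
        omega
      | var y => rw [KM_app_var, KM_app_var]
      | lam y u => rw [KM_app_lam, KM_app_lam]
      | c0 => rw [KM_app_c0, KM_app_c0]
    | smulCong α h ih =>
      intro E E' hEE Pi Pi' hPi
      rw [KM_smul, KM_smul, ih E E' hEE Pi Pi' hPi]
    | addCong h1 h2 ih1 ih2 =>
      intro E E' hEE Pi Pi' hPi
      rw [KM_add, KM_add, ih1 E E' hEE Pi Pi' hPi, ih2 E E' hEE Pi Pi' hPi]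
    | addZero M =>
      intro E E' hEE Pi Pi' hPi
      rw [KM_add, KM_zero, add_zero]
      exact A M E E' hEE Pi Pi' hPi
    | addAssoc M N P =>
      intro E E' hEE Pi Pi' hPi
      rw [KM_add, KM_add, KM_add, KM_add, A M E E' hEE Pi Pi' hPi,
        A N E E' hEE Pi Pi' hPi, A P E E' hEE Pi Pi' hPi, add_assoc]
    | addComm M N =>
      intro E E' hEE Pi Pi' hPi
      rw [KM_add, KM_add, A M E E' hEE Pi Pi' hPi, A N E E' hEE Pi Pi' hPi, add_comm]
    | smulAdd α M N =>
      intro E E' hEE Pi Pi' hPi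
      rw [KM_smul, KM_add, KM_add, KM_smul, KM_smul, A M E E' hEE Pi Pi' hPi,
        A N E E' hEE Pi Pi' hPi, mul_add]
    | addSmul α β M =>
      intro E E' hEE Pi Pi' hPi
      rw [KM_add, KM_smul, KM_smul, KM_smul, A M E E' hEE Pi Pi' hPi, add_mul]
    | smulSmul α β M =>
      intro E E' hEE Pi Pi' hPi
      rw [KM_smul, KM_smul, KM_smul, A M E E' hEE Pi Pi' hPi, mul_assoc]
    | oneSmul M =>
      intro E E' hEE Pi Pi' hPi
      rw [KM_smul, one_mul]
      exact A M E E' hEE Pi Pi' hPi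
    | zeroSmul M =>
      intro E E' hEE Pi Pi' hPi
      rw [KM_smul, KM_zero, zero_mul]
    | smulZero α =>
      intro E E' hEE Pi Pi' hPi
      rw [KM_smul, KM_zero, KM_zero, mul_zero]
    | lamAdd x M N =>
      intro E E' hEE Pi Pi' hPi
      cases t with
      | lam y u =>
        cases hPi with
        | nil => rw [KM_lam_nilPi, KM_add, KM_lam_nilPi, KM_lam_nilPi, add_zero]
        | cons hΓ hs =>
          cases π with
          | nil => rw [KM_lam_nilpi, KM_add, KM_lam_nilpi, KM_lam_nilpi, add_zero]
          | cons c πs =>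
            conv_rhs => rw [KM_add, KM_lam, KM_lam]
            rw [KM_lam, hEE.1]
            by_cases hcond : x = y ∧ RClo.IsOne (REnv.lookup x e) ∧
                x ∉ List.map Prod.fst E'
            · rw [if_pos hcond, if_pos hcond, if_pos hcond, KM_add]
              have hm : u.size + REnv.esize ((x, c) :: e) +
                  (πs.map RClo.csize).sum ≤ n := by
                rw [size_lam'] at hμ
                rw [esize_cons]
                simp at hμ ⊢
                omega
              rw [ihn u ((x, c) :: e) πs hm M M (AlgEq.refl M) _ _
                  (hEE.cons x hΓ) _ _ hs,
                ihn u ((x, c) :: e) πs hm N N (AlgEq.refl N) _ _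
                  (hEE.cons x hΓ) _ _ hs]
            · rw [if_neg hcond, if_neg hcond, if_neg hcond, add_zero]
      | var y => rw [KM_lam_var, KM_add, KM_lam_var, KM_lam_var, add_zero]
      | app t T => rw [KM_lam_app, KM_add, KM_lam_app, KM_lam_app, add_zero]
      | c0 => rw [KM_lam_c0, KM_add, KM_lam_c0, KM_lam_c0, add_zero]
    | lamSmul x α M =>
      intro E E' hEE Pi Pi' hPi
      cases t with
      | lam y u =>
        cases hPi with
        | nil => rw [KM_lam_nilPi, KM_smul, KM_lam_nilPi, mul_zero]
        | cons hΓ hs =>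
          cases π with
          | nil => rw [KM_lam_nilpi, KM_smul, KM_lam_nilpi, mul_zero]
          | cons c πs =>
            conv_rhs => rw [KM_smul, KM_lam]
            rw [KM_lam, hEE.1]
            by_cases hcond : x = y ∧ RClo.IsOne (REnv.lookup x e) ∧
                x ∉ List.map Prod.fst E'
            · rw [if_pos hcond, if_pos hcond, KM_smul]
              have hm : u.size + REnv.esize ((x, c) :: e) +
                  (πs.map RClo.csize).sum ≤ n := by
                rw [size_lam'] at hμ
                rw [esize_cons]
                simp at hμ ⊢
                omega
              rw [ihn u ((x, c) :: e) πs hm M M (AlgEq.refl M) _ _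
                  (hEE.cons x hΓ) _ _ hs]
            · rw [if_neg hcond, if_neg hcond, mul_zero]
      | var y => rw [KM_lam_var, KM_smul, KM_lam_var, mul_zero]
      | app t T => rw [KM_lam_app, KM_smul, KM_lam_app, mul_zero]
      | c0 => rw [KM_lam_c0, KM_smul, KM_lam_c0, mul_zero]
    | lamZero x =>
      intro E E' hEE Pi Pi' hPi
      cases t with
      | lam y u =>
        cases Pi with
        | nil => rw [KM_lam_nilPi, KM_zero]
        | cons Γ Pis =>
          cases π with
          | nil => rw [KM_lam_nilpi, KM_zero]
          | cons c πs =>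
            rw [KM_lam]
            simp only [KM_zero]
            rw [ite_self]
      | var y => rw [KM_lam_var, KM_zero]
      | app t T => rw [KM_lam_app, KM_zero]
      | c0 => rw [KM_lam_c0, KM_zero]
    | zeroApp M =>
      intro E E' hEE Pi Pi' hPi
      cases t with
      | app t T =>
        rw [KM_app]
        simp [KM_zero]
      | var y => rw [KM_app_var, KM_zero]
      | lam y u => rw [KM_app_lam, KM_zero]
      | c0 => rw [KM_app_c0, KM_zero]
    | smulApp α M N =>
      intro E E' hEE Pi Pi' hPi
      cases t with
      | app t T =>
        rw [KM_app, KM_smul, KM_app]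
        simp only [KM_smul]
        rw [List.sum_map_mul_left]
        congr 1
        refine congrArg List.sum (List.map_congr_left ?_)
        rintro ⟨p, hp⟩ -
        refine ihn t p.1 (RClo.mk T p.2 :: π) ?_ M M (AlgEq.refl M) E E' hEE _ _
          (List.Forall₂.cons (CloEq.mk (AlgEq.refl N) hEE.1 hEE.2) hPi)
        have hd := esize_of_mem_decomps hp
        rw [size_app'] at hμ
        simp [csize_mk] at hμ ⊢
        omega
      | var y => rw [KM_app_var, KM_smul, KM_app_var, mul_zero]
      | lam y u => rw [KM_app_lam, KM_smul, KM_app_lam, mul_zero]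
      | c0 => rw [KM_app_c0, KM_smul, KM_app_c0, mul_zero]
    | addApp M N P =>
      intro E E' hEE Pi Pi' hPi
      cases t with
      | app t T =>
        rw [KM_app, KM_add, KM_app, KM_app]
        simp only [KM_add]
        rw [List.sum_map_add]
        have key : ∀ (Q Q' : ATerm S), AlgEq Q Q' →
            ((decomps e).attach.map fun p =>
              KM Q E (AClo.mk P E :: Pi) t p.1.1 (RClo.mk T p.1.2 :: π)).sum =
            ((decomps e).attach.map fun p =>
              KM Q' E' (AClo.mk P E' :: Pi') t p.1.1 (RClo.mk T p.1.2 :: π)).sum := by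
          intro Q Q' hQ
          refine congrArg List.sum (List.map_congr_left ?_)
          rintro ⟨p, hp⟩ -
          refine ihn t p.1 (RClo.mk T p.2 :: π) ?_ Q Q' hQ E E' hEE _ _
            (List.Forall₂.cons (CloEq.mk (AlgEq.refl P) hEE.1 hEE.2) hPi)
          have hd := esize_of_mem_decomps hp
          rw [size_app'] at hμ
          simp [csize_mk] at hμ ⊢
          omega
        rw [key M M (AlgEq.refl M), key N N (AlgEq.refl N)]
      | var y => rw [KM_app_var, KM_add, KM_app_var, KM_app_var, add_zero]
      | lam y u => rw [KM_app_lam, KM_add, KM_app_lam, KM_app_lam, add_zero]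
      | c0 => rw [KM_app_c0, KM_add, KM_app_c0, KM_app_c0, add_zero]

theorem qKAM_algEq' (M N : ATerm S) (h : AlgEq M N) :
    ∀ t : RTerm, Khat M t = Khat N t := by
  intro t
  exact KM_congr (t.size) t [] [] (by simp [REnv.esize]) M N h [] []
    (AEnvEq.refl []) [] [] (forall₂_cloEq_refl [])

end KMresp3

/-- **The quantitative Krivine machine respects the algebraic equivalence**:
over a commutative semiring `S` in which every positive integer is invertible,
if `M` and `N` are closed algebraic terms with `M ≡_alg N`, then
`K̂(M)_t = K̂(N)_t` for every simple resource term `t`. -/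
theorem qKAM_algEq {S : Type*} [CommSemiring S]
    (hinv : ∀ n : ℕ, 0 < n → IsUnit ((n : S)))
    (M N : ATerm S) (hM : M.fv = ∅) (hN : N.fv = ∅) (h : AlgEq M N) :
    ∀ t : RTerm, Khat M t = Khat N t :=
  fun t => qKAM_algEq' M N h t
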